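/- Let N be a positive integer and n = 2^N - 1. Then for all x, y in ℚ (or any commutative ring), ∑_{m=0}^{n} z_n(m)·x^{s(m)}·y^{s(n-m)} = C(N,2)·y·(x+y)^{N-1}, where C(N,2) = N(N-1)/2. -/

import Mathlib

/-- Binary sum-of-digits function. -/
def sdig (m : ℕ) : ℕ := (Nat.digits 2 m).sum

/-- The `i`-th digit of `m` in base `b`. -/
def dig (b m i : ℕ) : ℕ := m / b ^ i % b

/-- `z_n(m) = ∑_{k=0}^{N-1} k·(1 - δ(n_k, m_k))`, the weighted count of positions
among the `N` lowest binary digits at which `m` and `n` differ. -/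
def zfun (N n m : ℕ) : ℕ :=
  ∑ k ∈ Finset.range N, k * (1 - if dig 2 n k = dig 2 m k then 1 else 0)

lemma sdig_rec (n : ℕ) : sdig n = n % 2 + sdig (n / 2) := by
  rcases Nat.eq_zero_or_pos n with h | h
  · simp [h, sdig]
  · unfold sdig
    rw [Nat.digits_def' (by norm_num) h]
    simp

lemma sdig_add_pow : ∀ k m : ℕ, m < 2 ^ k → sdig (m + 2 ^ k) = sdig m + 1 := by
  intro k
  induction k with
  | zero =>
    intro m hm
    interval_cases m
    rw [sdig_rec]
    simp [sdig]
  | succ k ih =>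
    intro m hm
    have h2 : (2:ℕ) ^ (k+1) = 2 * 2 ^ k := by ring
    have hd : (m + 2 ^ (k+1)) / 2 = m / 2 + 2 ^ k := by
      rw [h2, Nat.add_mul_div_left _ _ (by norm_num)]
    have hmod : (m + 2 ^ (k+1)) % 2 = m % 2 := by
      rw [h2, Nat.add_mul_mod_self_left]
    rw [sdig_rec (m + 2 ^ (k+1)), hd, hmod, ih (m / 2) (by omega),
      sdig_rec m]
    ring

lemma dig_pred_pow (N k : ℕ) (h : k < N) : dig 2 (2 ^ N - 1) k = 1 := by
  have := Nat.testBit_two_pow_sub_one N k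
  rw [Nat.testBit_eq_decide_div_mod_eq] at this
  simp only [h, decide_eq_true_eq, decide_true, eq_iff_iff, iff_true] at this
  simpa [dig] using this

lemma dig_high (m k : ℕ) (h : m < 2 ^ k) : dig 2 m k = 0 := by
  unfold dig
  rw [Nat.div_eq_of_lt h]

lemma dig_add_pow (m N k : ℕ) (h : k < N) : dig 2 (m + 2 ^ N) k = dig 2 m k := by
  unfold dig
  have h2 : (2:ℕ) ^ N = 2 ^ k * (2 * 2 ^ (N - k - 1)) := by
    rw [← pow_succ']
    rw [← pow_add]
    congr 1
    omega
  rw [h2, Nat.add_mul_div_left _ _ (by positivity), Nat.add_mul_mod_self_left]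

lemma dig_add_pow_self (m k : ℕ) (h : m < 2 ^ k) : dig 2 (m + 2 ^ k) k = 1 := by
  unfold dig
  rw [Nat.add_div_right _ (by positivity), Nat.div_eq_of_lt h]

lemma zfun_low (K m : ℕ) (h : m < 2 ^ K) :
    zfun (K + 1) (2 ^ (K + 1) - 1) m = zfun K (2 ^ K - 1) m + K := by
  unfold zfun
  rw [Finset.sum_range_succ]
  congr 1
  · apply Finset.sum_congr rfl
    intro k hk
    rw [Finset.mem_range] at hk
    rw [dig_pred_pow _ _ (by omega), dig_pred_pow _ _ hk]
  · rw [dig_pred_pow _ _ (by omega), dig_high m K h]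
    simp

lemma zfun_high (K m : ℕ) (h : m < 2 ^ K) :
    zfun (K + 1) (2 ^ (K + 1) - 1) (m + 2 ^ K) = zfun K (2 ^ K - 1) m := by
  unfold zfun
  rw [Finset.sum_range_succ]
  have h1 : dig 2 (2 ^ (K+1) - 1) K = 1 := dig_pred_pow _ _ (by omega)
  have h2 : dig 2 (m + 2 ^ K) K = 1 := dig_add_pow_self m K h
  rw [h1, h2]
  norm_num
  apply Finset.sum_congr rfl
  intro k hk
  rw [Finset.mem_range] at hk
  rw [dig_pred_pow _ _ (by omega), dig_pred_pow _ _ hk, dig_add_pow m K k hk]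

lemma sum_pow (x y : ℚ) : ∀ N : ℕ,
    (∑ m ∈ Finset.range (2 ^ N), x ^ sdig m * y ^ sdig (2 ^ N - 1 - m)) = (x + y) ^ N := by
  intro N
  induction N with
  | zero => simp [sdig]
  | succ N ih =>
    have hp : (0:ℕ) < 2 ^ N := by positivity
    have hsplit : (2:ℕ) ^ (N + 1) = 2 ^ N + 2 ^ N := by ring
    rw [hsplit, Finset.sum_range_add]
    have e1 : ∀ m ∈ Finset.range (2 ^ N),
        x ^ sdig m * y ^ sdig (2 ^ N + 2 ^ N - 1 - m) =
        y * (x ^ sdig m * y ^ sdig (2 ^ N - 1 - m)) := by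
      intro m hm
      rw [Finset.mem_range] at hm
      have : 2 ^ N + 2 ^ N - 1 - m = (2 ^ N - 1 - m) + 2 ^ N := by omega
      rw [this, sdig_add_pow N _ (by omega), pow_succ]
      ring
    have e2 : ∀ m ∈ Finset.range (2 ^ N),
        x ^ sdig (2 ^ N + m) * y ^ sdig (2 ^ N + 2 ^ N - 1 - (2 ^ N + m)) =
        x * (x ^ sdig m * y ^ sdig (2 ^ N - 1 - m)) := by
      intro m hm
      rw [Finset.mem_range] at hm
      have h1 : 2 ^ N + m = m + 2 ^ N := by omega
      have h2 : 2 ^ N + 2 ^ N - 1 - (m + 2 ^ N) = 2 ^ N - 1 - m := by omega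
      rw [h1, h2, sdig_add_pow N m hm, pow_succ]
      ring
    rw [Finset.sum_congr rfl e1, Finset.sum_congr rfl e2, ← Finset.mul_sum,
      ← Finset.mul_sum, ih, pow_succ]
    ring

lemma main_lemma (x y : ℚ) : ∀ N : ℕ, 0 < N →
    (∑ m ∈ Finset.range (2 ^ N), (zfun N (2 ^ N - 1) m : ℚ) * x ^ sdig m *
      y ^ sdig (2 ^ N - 1 - m)) = (N.choose 2 : ℚ) * y * (x + y) ^ (N - 1) := by
  intro N
  induction N with
  | zero => omega
  | succ K ih =>
    intro _
    rcases Nat.eq_zero_or_pos K with hK | hK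
    · subst hK
      norm_num [zfun, Finset.sum_range_succ]
    have hp : (0:ℕ) < 2 ^ K := by positivity
    have hsplit : (2:ℕ) ^ (K + 1) = 2 ^ K + 2 ^ K := by ring
    rw [hsplit, Finset.sum_range_add]
    have e1 : ∀ m ∈ Finset.range (2 ^ K),
        (zfun (K+1) (2 ^ K + 2 ^ K - 1) m : ℚ) * x ^ sdig m *
          y ^ sdig (2 ^ K + 2 ^ K - 1 - m) =
        y * ((zfun K (2 ^ K - 1) m : ℚ) * x ^ sdig m * y ^ sdig (2 ^ K - 1 - m))
          + (K : ℚ) * y * (x ^ sdig m * y ^ sdig (2 ^ K - 1 - m)) := by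
      intro m hm
      rw [Finset.mem_range] at hm
      have hz : (2:ℕ) ^ K + 2 ^ K - 1 = 2 ^ (K+1) - 1 := by omega
      have hc : 2 ^ (K+1) - 1 - m = (2 ^ K - 1 - m) + 2 ^ K := by omega
      rw [hz, hc, zfun_low K m hm, sdig_add_pow K _ (by omega), pow_succ]
      push_cast
      ring
    have e2 : ∀ m ∈ Finset.range (2 ^ K),
        (zfun (K+1) (2 ^ K + 2 ^ K - 1) (2 ^ K + m) : ℚ) * x ^ sdig (2 ^ K + m) *
          y ^ sdig (2 ^ K + 2 ^ K - 1 - (2 ^ K + m)) =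
        x * ((zfun K (2 ^ K - 1) m : ℚ) * x ^ sdig m * y ^ sdig (2 ^ K - 1 - m)) := by
      intro m hm
      rw [Finset.mem_range] at hm
      have hz : (2:ℕ) ^ K + 2 ^ K - 1 = 2 ^ (K+1) - 1 := by omega
      have h1 : 2 ^ K + m = m + 2 ^ K := by omega
      have h2 : 2 ^ (K+1) - 1 - (m + 2 ^ K) = 2 ^ K - 1 - m := by omega
      rw [hz, h1, h2, zfun_high K m hm, sdig_add_pow K m hm, pow_succ]
      ring
    rw [Finset.sum_congr rfl e1, Finset.sum_congr rfl e2, Finset.sum_add_distrib,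
      ← Finset.mul_sum, ← Finset.mul_sum, ← Finset.mul_sum, ih hK, sum_pow x y K]
    have hch : ((K+1).choose 2 : ℚ) = (K.choose 2 : ℚ) + K := by
      rw [Nat.choose_succ_succ]
      push_cast [Nat.choose_one_right]
      ring
    have hpow : (x + y) ^ (K - 1) * (x + y) = (x + y) ^ K := by
      rw [← pow_succ]
      congr 1
      omega
    rw [hch]
    simp only [Nat.add_sub_cancel]
    rw [← hpow]
    ring

/-- `∑_{m=0}^{n} z_n(m) x^{s(m)} y^{s(n-m)} = C(N,2)·y·(x+y)^{N-1}` for `n = 2^N - 1`. -/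
theorem sum_zfun_weighted (N : ℕ) (hN : 0 < N) (n : ℕ) (hn : n = 2 ^ N - 1) (x y : ℚ) :
    (∑ m ∈ Finset.range (n + 1), (zfun N n m : ℚ) * x ^ sdig m * y ^ sdig (n - m)) =
      (N.choose 2 : ℚ) * y * (x + y) ^ (N - 1) := by
  subst hn
  have h : 2 ^ N - 1 + 1 = 2 ^ N := by
    have : (0:ℕ) < 2 ^ N := by positivity
    omega
  rw [h]
  exact main_lemma x y N hN
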